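/- Let D₁, D₂ be t-structures on a triangulated category with D₁^{≤0} ⊆ D₂^{≤0}, and set H = D₁^{≥1} ∩ D₂^{≤0}. If Dᵢ is a t-structure with D₁^{≤0} ⊆ Dᵢ^{≤0} ⊆ D₂^{≤0}, then the pair (H ∩ Dᵢ^{≤0}, Dᵢ^{≥1} ∩ H) satisfies: Hom(H ∩ Dᵢ^{≤0}, Dᵢ^{≥1} ∩ H) = 0, and every object X ∈ H fits into a distinguished triangle Y → X → Z → ΣY with Y ∈ H ∩ Dᵢ^{≤0} and Z ∈ Dᵢ^{≥1} ∩ H. -/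

import Mathlib

open CategoryTheory Category Limits Pretriangulated Triangulated

variable {C : Type*} [Category C] [Preadditive C] [HasZeroObject C] [HasShift C ℤ]
  [∀ (n : ℤ), (shiftFunctor C n).Additive] [Pretriangulated C] [IsTriangulated C]

/-- An object right-orthogonal to the aisle `LE 0` is in `GE 1`. -/
lemma ge_of_orth (t : TStructure C) (X : C)
    (h : ∀ (A : C), t.le 0 A → ∀ (f : A ⟶ X), f = 0) : t.ge 1 X := by
  obtain ⟨A, B, hA, hB, f, g, hh, hT⟩ := t.exists_triangle X 0 1 rfl
  have hf : f = 0 := h A hA f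
  obtain ⟨r, hr⟩ := Triangle.yoneda_exact₂ _ hT (𝟙 X) (by rw [hf]; exact zero_comp)
  change B ⟶ X at r
  have hu : g ≫ (𝟙 B - r ≫ g) = 0 := by
    have := hr.symm
    change g ≫ r = 𝟙 X at this
    rw [Preadditive.comp_sub, comp_id, ← assoc, this, id_comp, sub_self]
  obtain ⟨w, hw⟩ := Triangle.yoneda_exact₃ _ hT (𝟙 B - r ≫ g) hu
  have hw0 : w = 0 := t.zero' w
    (t.le_monotone (show (-1 : ℤ) ≤ 0 by omega) _
      (t.le_shift 0 1 (-1) (by omega) A hA)) hB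
  have hrg : r ≫ g = 𝟙 B := by
    have := hw
    rw [hw0, comp_zero] at this
    exact (sub_eq_zero.1 this).symm
  have : IsIso g := ⟨r, hr.symm, hrg⟩
  exact ((t.ge 1).prop_iff_of_iso (asIso g)).2 hB

/-- An object left-orthogonal to the co-aisle `GE 1` is in `LE 0`. -/
lemma le_of_orth (t : TStructure C) (X : C)
    (h : ∀ (B : C), t.ge 1 B → ∀ (f : X ⟶ B), f = 0) : t.le 0 X := by
  obtain ⟨A, B, hA, hB, f, g, hh, hT⟩ := t.exists_triangle X 0 1 rfl
  have hg : g = 0 := h B hB g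
  obtain ⟨s, hs⟩ := Triangle.coyoneda_exact₂ _ hT (𝟙 X) (by rw [hg]; exact comp_zero)
  change X ⟶ A at s
  have hu : ((𝟙 A - f ≫ s) ≫ (Triangle.mk f g hh).invRotate.mor₂) = 0 := by
    change (𝟙 A - f ≫ s) ≫ f = 0
    have := hs.symm
    change s ≫ f = 𝟙 X at this
    rw [Preadditive.sub_comp, id_comp, assoc, this, comp_id, sub_self]
  obtain ⟨v, hv⟩ := Triangle.coyoneda_exact₂ _ (inv_rot_of_distTriang _ hT)
    (𝟙 A - f ≫ s) hu
  have hv0 : v = 0 := t.zero' v hA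
    (t.ge_antitone (show (1 : ℤ) ≤ 2 by omega) _
      (t.ge_shift 1 (-1) 2 (by omega) B hB))
  have hfs : f ≫ s = 𝟙 A := by
    rw [hv0, zero_comp] at hv
    exact (sub_eq_zero.1 hv).symm
  have : IsIso f := ⟨s, hfs, hs.symm⟩
  exact ((t.le 0).prop_iff_of_iso (asIso f).symm).2 hA

/-- Given t-structures `t₁ ≤ tᵢ ≤ t₂` (on the level of aisles), the pair
`(H ∩ Dᵢ^{≤0}, Dᵢ^{≥1} ∩ H)` with `H = D₁^{≥1} ∩ D₂^{≤0}` satisfies the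
orthogonality and decomposition axioms of a t-structure on `H`. -/
theorem stmt_5 (t₁ t₂ tᵢ : TStructure C)
    (h₁ : t₁.le 0 ≤ tᵢ.le 0) (h₂ : tᵢ.le 0 ≤ t₂.le 0) :
    (∀ (A B : C) (f : A ⟶ B),
        ((t₁.ge 1 A ∧ t₂.le 0 A) ∧ tᵢ.le 0 A) →
        (tᵢ.ge 1 B ∧ (t₁.ge 1 B ∧ t₂.le 0 B)) → f = 0) ∧
    (∀ (X : C), (t₁.ge 1 X ∧ t₂.le 0 X) →
      ∃ (Y Z : C) (_ : (t₁.ge 1 Y ∧ t₂.le 0 Y) ∧ tᵢ.le 0 Y)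
        (_ : tᵢ.ge 1 Z ∧ (t₁.ge 1 Z ∧ t₂.le 0 Z))
        (f : Y ⟶ X) (g : X ⟶ Z) (h : Z ⟶ Y⟦(1 : ℤ)⟧),
        Triangle.mk f g h ∈ distTriang C) := by
  constructor
  · rintro A B f ⟨-, hA⟩ ⟨hB, -⟩
    exact tᵢ.zero' f hA hB
  · rintro X ⟨hX₁, hX₂⟩
    obtain ⟨Y, Z, hY, hZ, f, g, h, hT⟩ := tᵢ.exists_triangle X 0 1 rfl
    refine ⟨Y, Z, ⟨⟨?_, h₂ _ hY⟩, hY⟩, ⟨hZ, ?_, ?_⟩, f, g, h, hT⟩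
    · -- Y ∈ t₁.GE 1
      apply ge_of_orth
      intro A hA a
      have ha : a ≫ (Triangle.mk f g h).invRotate.mor₂ = 0 := by
        dsimp [Triangle.invRotate]
        exact t₁.zero' (a ≫ f) hA hX₁
      obtain ⟨v, hv⟩ := Triangle.coyoneda_exact₂ _ (inv_rot_of_distTriang _ hT) a ha
      have hv0 : v = 0 := tᵢ.zero' v (h₁ _ hA)
        (tᵢ.ge_antitone (show (1 : ℤ) ≤ 2 by omega) _
          (tᵢ.ge_shift 1 (-1) 2 (by omega) Z hZ))
      rw [hv, hv0, zero_comp]; rfl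
    · -- Z ∈ t₁.GE 1
      apply ge_of_orth
      intro A hA a
      exact tᵢ.zero' a (h₁ _ hA) hZ
    · -- Z ∈ t₂.LE 0
      apply le_of_orth
      intro B hB b
      have hb : (Triangle.mk f g h).mor₂ ≫ b = 0 := t₂.zero' (g ≫ b) hX₂ hB
      obtain ⟨w, hw⟩ := Triangle.yoneda_exact₃ _ hT b hb
      have hw0 : w = 0 := t₂.zero' w
        (t₂.le_monotone (show (-1 : ℤ) ≤ 0 by omega) _
          (t₂.le_shift 0 1 (-1) (by omega) Y (h₂ _ hY))) hB
      rw [hw, hw0, comp_zero]; rfl
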